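/- Let $R$ be a noetherian ring, $I$ an ideal, and $M$ a finitely generated $R$-module. Then the set $\bigcup_{n > 0} \operatorname{Ass}_R(M/I^n M)$ is finite; moreover, for each $n > 0$, $\operatorname{Ass}_R(M/I^n M) \subseteq \bigcup_{i=0}^{n-1} \operatorname{Ass}_R(I^i M/I^{i+1} M)$, and the set $\bigcup_{i \ge 0} \operatorname{Ass}_R(I^i M/I^{i+1} M)$ is finite. -/

import Mathlib

open RingTheory.Sequence

/-- The dimension of a module `M` over `R`: the Krull dimension of `R ⧸ Ann_R(M)`. -/
noncomputable def moduleDim (R M : Type*) [CommRing R] [AddCommGroup M] [Module R M] :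
    WithBot ℕ∞ :=
  ringKrullDim (R ⧸ Module.annihilator R M)

open Classical in
/-- The depth of a module `M` over a local ring `R`: `⊤` if `M = 0`, otherwise the
supremum of lengths of `M`-regular sequences contained in the maximal ideal. -/
noncomputable def moduleDepth (R M : Type*) [CommRing R] [IsLocalRing R]
    [AddCommGroup M] [Module R M] : ℕ∞ :=
  if Subsingleton M then ⊤
  else sSup {n : ℕ∞ | ∃ rs : List R, (rs.length : ℕ∞) = n ∧
    (∀ x ∈ rs, x ∈ IsLocalRing.maximalIdeal R) ∧ RingTheory.Sequence.IsRegular M rs}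

open Classical in
/-- The codepth of a module over a local ring: `⊥` if `M = 0`, else `dim M - depth M`. -/
noncomputable def moduleCodepth (R M : Type*) [CommRing R] [IsLocalRing R]
    [AddCommGroup M] [Module R M] : WithBot ℕ∞ :=
  if Subsingleton M then ⊥
  else ((WithBot.unbotD 0 (moduleDim R M) - moduleDepth R M : ℕ∞) : WithBot ℕ∞)

/-- A localized module `M_𝔭` is Cohen–Macaulay over `R_𝔭`. -/
noncomputable def isCMAt (R M : Type*) [CommRing R] [AddCommGroup M] [Module R M]
    (𝔭 : Ideal R) [𝔭.IsPrime] : Prop :=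
  moduleDim (Localization.AtPrime 𝔭) (LocalizedModule 𝔭.primeCompl M)
    ≤ (moduleDepth (Localization.AtPrime 𝔭) (LocalizedModule 𝔭.primeCompl M) : WithBot ℕ∞)

/-- The Cohen–Macaulay locus of a ring `R`. -/
noncomputable def cmRingLocus (R : Type*) [CommRing R] : Set (PrimeSpectrum R) :=
  {𝔭 | moduleDim (Localization.AtPrime 𝔭.asIdeal) (Localization.AtPrime 𝔭.asIdeal)
    ≤ (moduleDepth (Localization.AtPrime 𝔭.asIdeal) (Localization.AtPrime 𝔭.asIdeal) :
        WithBot ℕ∞)}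

/-- The `n`-th codepth locus of a module. -/
noncomputable def codepthLocus (R M : Type*) [CommRing R] [AddCommGroup M] [Module R M]
    (n : ℕ) : Set (PrimeSpectrum R) :=
  {𝔭 | moduleCodepth (Localization.AtPrime 𝔭.asIdeal)
        (LocalizedModule 𝔭.asIdeal.primeCompl M) ≤ (n : ℕ∞)}

/-- A ring is catenary if any two saturated chains of primes with the same endpoints
have the same length. -/
def IsCatenary (R : Type*) [CommRing R] : Prop :=
  ∀ c₁ c₂ : RelSeries {p : PrimeSpectrum R × PrimeSpectrum R | p.1 ⋖ p.2},
    c₁.head = c₂.head → c₁.last = c₂.last → c₁.length = c₂.length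

open Classical in
/-- The grade of an ideal `J` on a module `M`. -/
noncomputable def moduleGrade {R : Type*} (M : Type*) [CommRing R] [AddCommGroup M]
    [Module R M] (J : Ideal R) : ℕ∞ :=
  if J • (⊤ : Submodule R M) = ⊤ then ⊤
  else sSup {n : ℕ∞ | ∃ rs : List R, (rs.length : ℕ∞) = n ∧
    (∀ x ∈ rs, x ∈ J) ∧ RingTheory.Sequence.IsWeaklyRegular M rs}

/-- The Cohen–Macaulay locus of a module `M` over `R`. -/
noncomputable def cmLocus (R M : Type*) [CommRing R] [AddCommGroup M] [Module R M] :
    Set (PrimeSpectrum R) :=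
  {𝔭 | moduleDim (Localization.AtPrime 𝔭.asIdeal) (LocalizedModule 𝔭.asIdeal.primeCompl M)
    ≤ (moduleDepth (Localization.AtPrime 𝔭.asIdeal)
        (LocalizedModule 𝔭.asIdeal.primeCompl M) : WithBot ℕ∞)}



section Aux
set_option synthInstance.maxHeartbeats 1000000
set_option maxHeartbeats 1000000

theorem ass_sub_union {R W : Type*} [CommRing R] [AddCommGroup W] [Module R W] (p : Submodule R W) :
    associatedPrimes R W ⊆ associatedPrimes R p ∪ associatedPrimes R (W ⧸ p) := by
  exact associatedPrimes.subset_union_of_exact p.injective_subtype (LinearMap.exact_subtype_mkQ p)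

theorem ass_quot_chain {R W : Type*} [CommRing R] [AddCommGroup W] [Module R W] {A B : Submodule R W}
    (h : B ≤ A) :
    associatedPrimes R (W ⧸ B) ⊆
      associatedPrimes R (A ⧸ Submodule.comap A.subtype B) ∪ associatedPrimes R (W ⧸ A) := by
  set f : A →ₗ[R] W ⧸ B := B.mkQ ∘ₗ A.subtype with hf
  have hker : LinearMap.ker f = Submodule.comap A.subtype B := by
    rw [hf, LinearMap.ker_comp, Submodule.ker_mkQ]
  have hrange : LinearMap.range f = A.map B.mkQ := by
    rw [hf, LinearMap.range_comp, Submodule.range_subtype]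
  have e1 : (A ⧸ Submodule.comap A.subtype B) ≃ₗ[R] (A.map B.mkQ : Submodule R (W ⧸ B)) :=
    (Submodule.quotEquivOfEq _ _ hker.symm).trans
      (f.quotKerEquivRange.trans (LinearEquiv.ofEq _ _ hrange))
  have e2 : ((W ⧸ B) ⧸ A.map B.mkQ) ≃ₗ[R] W ⧸ A :=
    Submodule.quotientQuotientEquivQuotient B A h
  intro q hq
  rcases ass_sub_union (A.map B.mkQ) hq with h' | h'
  · exact Or.inl ((LinearEquiv.AssociatedPrimes.eq e1).symm ▸ h')
  · exact Or.inr ((LinearEquiv.AssociatedPrimes.eq e2) ▸ h')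

theorem part2 {R M : Type*} [CommRing R] [AddCommGroup M] [Module R M] (I : Ideal R) (n : ℕ) :
    associatedPrimes R (M ⧸ (I ^ n • ⊤ : Submodule R M)) ⊆
      ⋃ i ∈ Finset.range n, associatedPrimes R
        ((I ^ i • ⊤ : Submodule R M) ⧸
          Submodule.comap (I ^ i • ⊤ : Submodule R M).subtype
            (I ^ (i + 1) • ⊤ : Submodule R M)) := by
  induction n with
  | zero =>
    have h0 : (I ^ 0 • ⊤ : Submodule R M) = ⊤ := by simp
    have : Subsingleton (M ⧸ (I ^ 0 • ⊤ : Submodule R M)) :=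
      Submodule.Quotient.subsingleton_iff.mpr h0
    rw [associatedPrimes.eq_empty_of_subsingleton]
    exact Set.empty_subset _
  | succ n ih =>
    intro q hq
    have hle : (I ^ (n + 1) • ⊤ : Submodule R M) ≤ I ^ n • ⊤ :=
      Submodule.smul_mono_left (Ideal.pow_le_pow_right (Nat.le_succ n))
    rcases ass_quot_chain hle hq with h' | h'
    · exact Set.mem_biUnion (Finset.self_mem_range_succ n) h'
    · exact Set.biUnion_subset_biUnion_left
        (fun i hi => Finset.mem_range_succ_iff.mpr (Finset.mem_range.mp hi).le) (ih h')

theorem ass_restrict_singleton {R S Q : Type*} [CommRing R] [CommRing S] [Algebra R S]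
    [AddCommGroup Q] [Module S Q] [Module R Q] [IsScalarTower R S Q]
    {x : Q} (hP : ((Submodule.span S {x}).annihilator).IsPrime) :
    associatedPrimes R ((Submodule.span S {x}).restrictScalars R) ⊆
      {((Submodule.span S {x}).annihilator).comap (algebraMap R S)} := by
  rintro q ⟨hq, y, rfl⟩
  have hy0 : y ≠ 0 := by
    rintro rfl
    apply hq.ne_top
    rw [Submodule.colon_singleton_zero, Ideal.radical_top]
  obtain ⟨s, hs⟩ := Submodule.mem_span_singleton.mp y.2
  have hsP : s ∉ (Submodule.span S {x}).annihilator := by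
    intro h
    apply hy0
    ext
    show (y : Q) = 0
    rw [← hs]
    exact (Submodule.mem_annihilator_span_singleton x s).mp h
  simp only [Set.mem_singleton_iff]
  ext r
  rw [Ideal.mem_radical_iff, Ideal.mem_comap]
  simp_rw [Submodule.mem_colon_singleton, Submodule.mem_bot]
  constructor
  · rintro ⟨n, h⟩
    have h2 : (algebraMap R S (r ^ n) * s) • x = 0 := by
      have h3 : (r ^ n : R) • (y : Q) = 0 := congrArg Subtype.val h
      rw [← hs, ← smul_assoc, Algebra.smul_def] at h3
      exact h3
    rcases hP.mul_mem_iff_mem_or_mem.mp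
        ((Submodule.mem_annihilator_span_singleton x _).mpr h2) with h' | h'
    · rw [map_pow] at h'
      exact hP.mem_of_pow_mem n h'
    · exact absurd h' hsP
  · intro h
    refine ⟨1, ?_⟩
    ext
    show (r ^ 1) • (y : Q) = 0
    rw [pow_one, ← hs, ← smul_assoc, Algebra.smul_def]
    exact (Submodule.mem_annihilator_span_singleton x _).mp
      (Ideal.mul_mem_right s _ h)

theorem ass_finite_of_finite_over (R : Type*) {S Q : Type*} [CommRing R] [CommRing S]
    [Algebra R S] [IsNoetherianRing S] [AddCommGroup Q] [Module S Q] [Module R Q]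
    [IsScalarTower R S Q] [Module.Finite S Q] : (associatedPrimes R Q).Finite := by
  have hN : IsNoetherian S Q := isNoetherian_of_isNoetherianRing_of_finite S Q
  have key : ∀ K : Submodule S Q, (associatedPrimes R (Q ⧸ K)).Finite := by
    intro K
    induction K using IsNoetherian.induction with
    | _ K IH =>
      by_cases hs : Subsingleton (Q ⧸ K)
      · rw [associatedPrimes.eq_empty_of_subsingleton]; exact Set.finite_empty
      have : Nontrivial (Q ⧸ K) := not_subsingleton_iff_nontrivial.mp hs
      obtain ⟨P, hP⟩ := associatedPrimes.nonempty S (Q ⧸ K)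
      obtain ⟨hPprime, x, hx⟩ := isAssociatedPrime_iff.mp hP
      have hx0 : x ≠ 0 := by
        rintro rfl
        apply hPprime.ne_top
        rw [hx, Submodule.colon_singleton_zero]
      set N : Submodule S (Q ⧸ K) := Submodule.span S {x} with hNdef
      set K' : Submodule S Q := N.comap K.mkQ with hK'def
      have hKK' : K < K' := by
        constructor
        · intro a ha
          show K.mkQ a ∈ N
          have h0 : K.mkQ a = 0 := by
            rw [Submodule.mkQ_apply, Submodule.Quotient.mk_eq_zero]; exact ha
          rw [h0]; exact N.zero_mem
        · intro hle
          obtain ⟨a, ha⟩ := Submodule.mkQ_surjective K x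
          have haK' : a ∈ K' := by
            show K.mkQ a ∈ N
            rw [ha]; exact Submodule.mem_span_singleton_self x
          have h0 : K.mkQ a = 0 := by
            rw [Submodule.mkQ_apply, Submodule.Quotient.mk_eq_zero]
            exact hle haK'
          exact hx0 (by rw [← ha, h0])
      have hmap : K'.map K.mkQ = N := by
        rw [hK'def, Submodule.map_comap_eq, Submodule.range_mkQ, top_inf_eq]
      have hsub := ass_sub_union (N.restrictScalars R)
      have e2 : (((Q ⧸ K) ⧸ N.restrictScalars R)) ≃ₗ[R] (Q ⧸ K') :=
        (Submodule.Quotient.restrictScalarsEquiv R N).trans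
          (((Submodule.quotEquivOfEq N (K'.map K.mkQ) hmap.symm).trans
            (Submodule.quotientQuotientEquivQuotient K K' hKK'.le)).restrictScalars R)
      have h1 : (associatedPrimes R (N.restrictScalars R)).Finite :=
        Set.Finite.subset (Set.finite_singleton _) (ass_restrict_singleton (by
          have hann : (Submodule.span S {x}).annihilator = (⊥ : Submodule S (Q ⧸ K)).colon {x} := by
            ext r; rw [Submodule.mem_annihilator_span_singleton, Submodule.mem_colon_singleton, Submodule.mem_bot]
          rw [hann, ← hx]; exact hPprime))
      have h2 : (associatedPrimes R ((Q ⧸ K) ⧸ N.restrictScalars R)).Finite := by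
        rw [LinearEquiv.AssociatedPrimes.eq e2]
        exact IH K' hKK'
      exact ((h1.union h2).subset hsub)
  have e : (Q ⧸ (⊥ : Submodule S Q)) ≃ₗ[R] Q :=
    (Submodule.quotEquivOfEqBot ⊥ rfl).restrictScalars R
  rw [← LinearEquiv.AssociatedPrimes.eq e]
  exact key ⊥

universe u
variable {R M : Type u} [CommRing R] [IsNoetherianRing R] [AddCommGroup M] [Module R M]
  [Module.Finite R M] (I : Ideal R)

theorem part3core :
    Set.Finite {𝔭 : Ideal R | ∃ i : ℕ,
      𝔭 ∈ associatedPrimes R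
        ((I ^ i • ⊤ : Submodule R M) ⧸
          Submodule.comap (I ^ i • ⊤ : Submodule R M).subtype
            (I ^ (i + 1) • ⊤ : Submodule R M))} := by
  classical
  have hNoeth : IsNoetherian R M := isNoetherian_of_isNoetherianRing_of_finite R M
  set F : I.Filtration M := I.stableFiltration ⊤ with hF
  set F' : I.Filtration M := I.stableFiltration (I • ⊤) with hF'
  have hF'N : ∀ i, F'.N i = I ^ (i + 1) • (⊤ : Submodule R M) := by
    intro i
    show I ^ i • (I • ⊤) = _
    rw [← Submodule.smul_assoc, smul_eq_mul, ← pow_succ]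
  have hfg : F.submodule.FG := by
    rw [Ideal.Filtration.submodule_fg_iff_stable]
    · exact I.stableFiltration_stable ⊤
    · intro i
      exact IsNoetherian.noetherian _
  letI iAG : AddCommGroup ↥F.submodule := inferInstance
  letI iMS : Module (reesAlgebra I) ↥F.submodule := inferInstance
  letI iMR : Module R ↥F.submodule := inferInstance
  letI iT : IsScalarTower R (reesAlgebra I) ↥F.submodule := inferInstance
  haveI : Module.Finite (reesAlgebra I) ↥F.submodule := (Module.Finite.iff_fg).mpr hfg
  set K : Submodule (reesAlgebra I) ↥F.submodule :=
    Submodule.comap F.submodule.subtype F'.submodule with hK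
  set Q : Type u := ↥F.submodule ⧸ K with hQ
  letI iQS : Module (reesAlgebra I) Q := inferInstance
  letI iQR : Module R Q := Submodule.Quotient.module' K
  letI iQT : IsScalarTower R (reesAlgebra I) Q := inferInstance
  haveI : Module.Finite (reesAlgebra I) Q := Module.Finite.quotient (reesAlgebra I) K
  have hfin : (associatedPrimes R Q).Finite := ass_finite_of_finite_over R (S := reesAlgebra I) (Q := Q)
  refine hfin.subset ?_
  rintro p ⟨i, hp⟩
  have hmem : ∀ x : (I ^ i • ⊤ : Submodule R M),
      PolynomialModule.lsingle R i (x : M) ∈ F.submodule := by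
    intro x j
    rw [PolynomialModule.lsingle_apply]
    split_ifs with h
    · subst h; exact x.2
    · exact Submodule.zero_mem _
  set g : (I ^ i • ⊤ : Submodule R M) →ₗ[R] Q :=
    { toFun := fun x => Submodule.Quotient.mk ⟨PolynomialModule.lsingle R i (x : M), hmem x⟩
      map_add' := by
        intro x y
        show Submodule.Quotient.mk _ = Submodule.Quotient.mk _ + Submodule.Quotient.mk _
        rw [← Submodule.Quotient.mk_add]
        exact congrArg _ (Subtype.ext (by push_cast; rw [map_add]))
      map_smul' := by
        intro r x
        show Submodule.Quotient.mk _ = (RingHom.id R) r • Submodule.Quotient.mk _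
        rw [RingHom.id_apply, ← Submodule.Quotient.mk_smul]
        exact congrArg _ (Subtype.ext (by push_cast; rw [map_smul])) } with hg
  have hker : LinearMap.ker g =
      Submodule.comap (I ^ i • ⊤ : Submodule R M).subtype (I ^ (i + 1) • ⊤ : Submodule R M) := by
    ext x
    constructor
    · intro hx
      have h0 : (⟨PolynomialModule.lsingle R i (x : M), hmem x⟩ : F.submodule) ∈ K :=
        (Submodule.Quotient.mk_eq_zero K).mp hx
      have h1 : ∀ j, (PolynomialModule.lsingle R i (x : M)).coeff j ∈ F'.N j := h0
      have h2 := h1 i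
      rw [hF'N, PolynomialModule.lsingle_apply, if_pos rfl] at h2
      exact h2
    · intro hx
      show Submodule.Quotient.mk _ = (0 : Q)
      rw [Submodule.Quotient.mk_eq_zero K]
      show ∀ j, (PolynomialModule.lsingle R i (x : M)).coeff j ∈ F'.N j
      intro j
      rw [hF'N, PolynomialModule.lsingle_apply]
      split_ifs with hji
      · subst hji; exact hx
      · exact Submodule.zero_mem _
  have hinj : Function.Injective (Submodule.liftQ _ g hker.ge) := by
    rw [← LinearMap.ker_eq_bot, Submodule.ker_liftQ_eq_bot _ _ _ hker.le]
  exact associatedPrimes.subset_of_injective hinj hp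

noncomputable def gr_quot_equiv {R : Type*} [CommRing R] {M' M : Type*} [AddCommGroup M']
    [Module R M'] [AddCommGroup M] [Module R M] (e : M' ≃ₗ[R] M) {A B : Submodule R M'}
    {A' B' : Submodule R M}
    (hA : A.map (e : M' →ₗ[R] M) = A') (hB : B.map (e : M' →ₗ[R] M) = B') :
    (A ⧸ Submodule.comap A.subtype B) ≃ₗ[R] (A' ⧸ Submodule.comap A'.subtype B') := by
  refine Submodule.Quotient.equiv _ _ (e.ofSubmodules A A' hA) ?_
  ext y
  simp only [Submodule.mem_map, Submodule.mem_comap, Submodule.coe_subtype]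
  constructor
  · rintro ⟨a, ha, rfl⟩
    have hc : ((e.ofSubmodules A A' hA) a : M) = e (a : M') := by simp
    rw [LinearEquiv.coe_coe, hc, ← hB]
    exact ⟨a, ha, rfl⟩
  · intro hy
    refine ⟨(e.ofSubmodules A A' hA).symm y, ?_, by simp⟩
    have hc : (((e.ofSubmodules A A' hA).symm y : A) : M') = e.symm (y : M) := by simp
    rw [hc]
    rw [← hB] at hy
    obtain ⟨b, hb, hby⟩ := hy
    rwa [show e.symm (y : M) = b from by rw [← hby]; exact e.symm_apply_apply b]

theorem part3' {R : Type*} {M : Type*} [CommRing R] [IsNoetherianRing R] [AddCommGroup M]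
    [Module R M] [Module.Finite R M] (I : Ideal R) :
    Set.Finite {𝔭 : Ideal R | ∃ i : ℕ,
      𝔭 ∈ associatedPrimes R
        ((I ^ i • ⊤ : Submodule R M) ⧸
          Submodule.comap (I ^ i • ⊤ : Submodule R M).subtype
            (I ^ (i + 1) • ⊤ : Submodule R M))} := by
  obtain ⟨n, f, hf⟩ := Module.Finite.exists_fin' R M
  let M' := (Fin n → R) ⧸ LinearMap.ker f
  let e : M' ≃ₗ[R] M := f.quotKerEquivOfSurjective hf
  haveI : Module.Finite R M' := Module.Finite.quotient R _
  have hmap : ∀ i : ℕ,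
      (I ^ i • ⊤ : Submodule R M').map (e : M' →ₗ[R] M) = (I ^ i • ⊤ : Submodule R M) := by
    intro i
    rw [Submodule.map_smul'', Submodule.map_top, LinearEquiv.range]
  have key : ∀ i : ℕ,
      associatedPrimes R
        ((I ^ i • ⊤ : Submodule R M) ⧸
          Submodule.comap (I ^ i • ⊤ : Submodule R M).subtype
            (I ^ (i + 1) • ⊤ : Submodule R M)) =
      associatedPrimes R
        ((I ^ i • ⊤ : Submodule R M') ⧸
          Submodule.comap (I ^ i • ⊤ : Submodule R M').subtype
            (I ^ (i + 1) • ⊤ : Submodule R M')) := by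
    intro i
    exact (LinearEquiv.AssociatedPrimes.eq (gr_quot_equiv e (hmap i) (hmap (i + 1)))).symm
  have : {𝔭 : Ideal R | ∃ i : ℕ,
      𝔭 ∈ associatedPrimes R
        ((I ^ i • ⊤ : Submodule R M) ⧸
          Submodule.comap (I ^ i • ⊤ : Submodule R M).subtype
            (I ^ (i + 1) • ⊤ : Submodule R M))} = {𝔭 : Ideal R | ∃ i : ℕ,
      𝔭 ∈ associatedPrimes R
        ((I ^ i • ⊤ : Submodule R M') ⧸
          Submodule.comap (I ^ i • ⊤ : Submodule R M').subtype
            (I ^ (i + 1) • ⊤ : Submodule R M'))} := by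
    ext p
    simp only [Set.mem_setOf_eq, key]
  rw [this]
  exact part3core I

end Aux

theorem stmt19 (R M : Type*) [CommRing R] [IsNoetherianRing R]
    [AddCommGroup M] [Module R M] [Module.Finite R M] (I : Ideal R) :
    Set.Finite {𝔭 : Ideal R | ∃ n : ℕ, 0 < n ∧
      𝔭 ∈ associatedPrimes R (M ⧸ (I ^ n • ⊤ : Submodule R M))} ∧
    (∀ n : ℕ, 0 < n → associatedPrimes R (M ⧸ (I ^ n • ⊤ : Submodule R M)) ⊆
      ⋃ i ∈ Finset.range n, associatedPrimes R
        ((I ^ i • ⊤ : Submodule R M) ⧸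
          Submodule.comap (I ^ i • ⊤ : Submodule R M).subtype
            (I ^ (i + 1) • ⊤ : Submodule R M))) ∧
    Set.Finite {𝔭 : Ideal R | ∃ i : ℕ,
      𝔭 ∈ associatedPrimes R
        ((I ^ i • ⊤ : Submodule R M) ⧸
          Submodule.comap (I ^ i • ⊤ : Submodule R M).subtype
            (I ^ (i + 1) • ⊤ : Submodule R M))} := by
  refine ⟨?_, fun n _ => part2 I n, part3' (M := M) I⟩
  refine (part3' (M := M) I).subset ?_
  rintro p ⟨n, hn, hp⟩
  have := part2 I n hp
  rw [Set.mem_iUnion₂] at this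
  obtain ⟨i, _, hi⟩ := this
  exact ⟨i, hi⟩
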